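/- Let F ⊂ H be a Lagrangian (maximal totally isotropic) subspace and F' a complementary isotropic subspace. For A ∈ sp(H), the normally ordered lift satisfies τ̂_{F'}(A) = τ(A) − (1/2)·trace(A^{F'}), where A^{F'} ∈ End(F') is the restriction of A to F' followed by projection onto F' along F. -/

import Mathlib

/-- For `F ⊂ H` Lagrangian, `F'` a complementary isotropic subspace and
`A ∈ sp(H)`, the normally ordered lift satisfies
`τ̂_{F'}(A) = τ(A) − (1/2)·trace(A^{F'})`, where `A^{F'} = p ∘ A ∘ incl_{F'}` with `p`
the projection of `H` onto `F'` along `F`. -/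
theorem heisenberg_tauhat_eq_tau_sub_half_trace {k H U : Type*} [Field k] [CharZero k]
    [AddCommGroup H] [Module k H] [FiniteDimensional k H]
    [Ring U] [Algebra k U]
    (B : LinearMap.BilinForm k H) (hskew : ∀ x y : H, B x y = - B y x)
    (hnd : B.Nondegenerate)
    (ι : H →ₗ[k] U) (h : U)
    (hcomm : ∀ a b : H, ι a * ι b - ι b * ι a = (B a b) • h)
    (hcentral : ∀ u : U, h * u = u * h) (hunit : IsUnit h)
    (sp : Submodule k (Module.End k H))
    (hsp : ∀ A : Module.End k H, A ∈ sp ↔ ∀ x y : H, B (A x) y + B x (A y) = 0)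
    (hGmem : ∀ a : H,
      (LinearMap.toSpanSingleton k H a).comp ((2 : k) • (B a)) ∈ sp)
    -- F Lagrangian, F' complementary isotropic
    (F F' : Submodule k H) (hcompl : IsCompl F F')
    (hFiso : ∀ a ∈ F, ∀ b ∈ F, B a b = 0)
    (hF'iso : ∀ a ∈ F', ∀ b ∈ F', B a b = 0)
    (hFmax : ∀ x : H, (∀ a ∈ F, B a x = 0) → x ∈ F)
    -- the projection p of H onto F' along F
    (p : H →ₗ[k] F') (hp0 : ∀ a ∈ F, p a = 0) (hp1 : ∀ b : F', p (b : H) = b)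
    -- τ and the normally ordered τ̂_{F'}, determined on the generators E(u⊗u)
    (τ τhat : sp →ₗ[k] U)
    (hτ : ∀ u : H,
      τ ⟨(LinearMap.toSpanSingleton k H u).comp ((2 : k) • (B u)), hGmem u⟩ * h
        = ι u * ι u)
    (hτhat : ∀ (a : F) (a' : F'),
      τhat ⟨(LinearMap.toSpanSingleton k H ((a : H) + (a' : H))).comp
              ((2 : k) • (B ((a : H) + (a' : H)))), hGmem _⟩ * h
        = ι (a : H) * ι (a : H) + (2 : k) • (ι (a' : H) * ι (a : H))
            + ι (a' : H) * ι (a' : H)) :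
    ∀ A : sp,
      τhat A = τ A
        - ((1 / 2 : k) * LinearMap.trace k F' (p ∘ₗ A.1 ∘ₗ F'.subtype)) • (1 : U) := by
  classical
  set G : H → Module.End k H :=
    fun u => (LinearMap.toSpanSingleton k H u).comp ((2 : k) • (B u)) with hGdef
  have hGapp : ∀ u x : H, G u x = (2 * B u x) • u := by
    intro u x
    simp [hGdef, LinearMap.toSpanSingleton_apply, smul_eq_mul]
  -- right nondegeneracy
  have hndr : ∀ w : H, (∀ z : H, B z w = 0) → w = 0 := by
    intro w hw
    refine hnd.1 w (fun n => ?_)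
    rw [hskew, hw n, neg_zero]
  -- bases
  let e := Module.finBasis k H
  let c := B.dualBasis hnd e
  have hBc : ∀ (i) (x : H), B (c i) x = e.repr x i := by
    intro i x
    conv_lhs => rw [← Module.Basis.sum_repr e x]
    rw [map_sum]
    simp [LinearMap.BilinForm.apply_dualBasis_left, c]
  have hrep : ∀ (A : Module.End k H) (x : H),
      A x = ∑ i, e.repr x i • A (e i) := by
    intro A x
    conv_lhs => rw [← Module.Basis.sum_repr e x]
    rw [map_sum]
    simp
  -- key representation of a symplectic endomorphism
  have hrep2 : ∀ (A : Module.End k H), (∀ x y : H, B (A x) y + B x (A y) = 0) →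
      ∀ x : H, (∑ i, (B (A (e i)) x) • c i) = A x := by
    intro A hA x
    have key : ∀ z : H, B z ((∑ i, (B (A (e i)) x) • c i) - A x) = 0 := by
      intro z
      rw [map_sub, map_sum]
      have h1 : ∀ i, B z ((B (A (e i)) x) • c i) = -(e.repr z i * B (A (e i)) x) := by
        intro i
        rw [map_smul, smul_eq_mul, hskew z (c i), hBc i z]
        ring
      rw [Finset.sum_congr rfl (fun i _ => h1 i)]
      have h2 : B (A z) x = ∑ i, e.repr z i * B (A (e i)) x := by
        rw [hrep A z, map_sum, LinearMap.sum_apply]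
        simp [smul_eq_mul]
      have h3 := hA z x
      rw [Finset.sum_neg_distrib, ← h2]
      have h4 : B z (A x) = - B (A z) x := by
        linear_combination hA z x
      rw [h4]
      ring
    have := hndr _ (fun z => key z)
    exact sub_eq_zero.mp this
  -- decomposition of A as a combination of generators
  have hdecomp : ∀ (A : Module.End k H), (∀ x y : H, B (A x) y + B x (A y) = 0) →
      A = (4 : k)⁻¹ • ∑ i, (G (c i + A (e i)) - G (c i) - G (A (e i))) := by
    intro A hA
    apply LinearMap.ext
    intro x
    rw [LinearMap.smul_apply, LinearMap.sum_apply]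
    have hterm : ∀ i, (G (c i + A (e i)) - G (c i) - G (A (e i))) x
        = (2 * B (c i) x) • A (e i) + (2 * B (A (e i)) x) • c i := by
      intro i
      simp only [LinearMap.sub_apply, hGapp, map_add, LinearMap.add_apply]
      module
    rw [Finset.sum_congr rfl (fun i _ => hterm i)]
    rw [Finset.sum_add_distrib]
    have hs1 : (∑ i, (2 * B (c i) x) • A (e i)) = (2 : k) • A x := by
      calc (∑ i, (2 * B (c i) x) • A (e i))
          = ∑ i, (2 : k) • (e.repr x i • A (e i)) :=
            Finset.sum_congr rfl (fun i _ => by rw [hBc i x, smul_smul])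
        _ = (2 : k) • ∑ i, e.repr x i • A (e i) := (Finset.smul_sum).symm
        _ = (2 : k) • A x := by rw [← hrep A x]
    have hs2 : (∑ i, (2 * B (A (e i)) x) • c i) = (2 : k) • A x := by
      have := hrep2 A hA x
      calc (∑ i, (2 * B (A (e i)) x) • c i)
          = (2:k) • ∑ i, (B (A (e i)) x) • c i := by
            rw [Finset.smul_sum]
            refine Finset.sum_congr rfl (fun i _ => ?_)
            rw [smul_smul]
        _ = (2:k) • A x := by rw [this]
    rw [hs1, hs2]
    module
  -- span of generators
  have hle : Submodule.span k (Set.range G) ≤ sp := by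
    rw [Submodule.span_le]
    rintro _ ⟨u, rfl⟩
    exact hGmem u
  have hspan : ∀ A : Module.End k H, A ∈ sp → A ∈ Submodule.span k (Set.range G) := by
    intro A hA
    rw [hdecomp A ((hsp A).mp hA)]
    refine Submodule.smul_mem _ _ (Submodule.sum_mem _ (fun i _ => ?_))
    exact sub_mem (sub_mem (Submodule.subset_span ⟨_, rfl⟩)
      (Submodule.subset_span ⟨_, rfl⟩)) (Submodule.subset_span ⟨_, rfl⟩)
  -- the defect linear map
  let Tr : sp →ₗ[k] k :=
    { toFun := fun A => (1 / 2 : k) * LinearMap.trace k F' (p ∘ₗ A.1 ∘ₗ F'.subtype)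
      map_add' := by
        intro A₁ A₂
        simp only [Submodule.coe_add, LinearMap.add_comp, LinearMap.comp_add, map_add]
        ring
      map_smul' := by
        intro r A₁
        simp only [Submodule.coe_smul, LinearMap.smul_comp, LinearMap.comp_smul, map_smul,
          smul_eq_mul, RingHom.id_apply]
        ring }
  let δ : sp →ₗ[k] U := (τhat - τ) + Tr.smulRight (1 : U)
  have hcancel : ∀ x y : U, x * h = y * h → x = y := fun x y hxy =>
    hunit.mul_right_cancel hxy
  -- δ vanishes on generators
  have hδG : ∀ u : H, δ ⟨G u, hGmem u⟩ = 0 := by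
    intro u
    have hu : u ∈ F ⊔ F' := by rw [hcompl.sup_eq_top]; trivial
    rw [Submodule.mem_sup] at hu
    obtain ⟨a, ha, a', ha', hsum⟩ := hu
    -- trace computation
    have hpu : p u = ⟨a', ha'⟩ := by
      rw [← hsum, map_add, hp0 a ha, hp1 ⟨a', ha'⟩, zero_add]
    have hend : p ∘ₗ (G u) ∘ₗ F'.subtype
        = (LinearMap.toSpanSingleton k F' (p u)) ∘ₗ (((2 : k) • (B u)) ∘ₗ F'.subtype) := by
      apply LinearMap.ext
      intro b
      simp only [LinearMap.comp_apply, Submodule.coe_subtype, hGapp, map_smul,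
        LinearMap.toSpanSingleton_apply, LinearMap.smul_apply, smul_eq_mul]
    have htrace : LinearMap.trace k F' (p ∘ₗ (G u) ∘ₗ F'.subtype) = 2 * B a a' := by
      rw [hend, LinearMap.trace_comp_comm']
      have : ((((2 : k) • (B u)) ∘ₗ F'.subtype) ∘ₗ LinearMap.toSpanSingleton k F' (p u))
          = (2 * B u a') • (LinearMap.id (R := k) (M := k)) := by
        apply LinearMap.ext
        intro t
        simp only [LinearMap.comp_apply, LinearMap.toSpanSingleton_apply, map_smul,
          Submodule.coe_subtype, LinearMap.smul_apply, smul_eq_mul, LinearMap.id_apply, hpu]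
        ring
      rw [this, map_smul, LinearMap.trace_id, Module.finrank_self]
      have hBua' : B u a' = B a a' := by
        rw [← hsum, map_add, LinearMap.add_apply, hF'iso a' ha' a' ha', add_zero]
      rw [hBua']
      simp [smul_eq_mul]
    -- algebraic identity
    have hτh := hτ u
    have hτhath := hτhat ⟨a, ha⟩ ⟨a', ha'⟩
    have hGeq : (⟨G (((⟨a, ha⟩ : F) : H) + ((⟨a', ha'⟩ : F') : H))
        , hGmem _⟩ : sp) = (⟨G u, hGmem u⟩ : sp) := by
      apply Subtype.ext
      show G (a + a') = G u
      rw [hsum]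
    have hιu : ι u * ι u
        = ι a * ι a + (2 : k) • (ι a' * ι a) + ι a' * ι a' + (B a a') • h := by
      have hca : ι a * ι a' = ι a' * ι a + (B a a') • h := by
        have hc0 := hcomm a a'
        rw [sub_eq_iff_eq_add] at hc0
        rw [hc0, add_comm]
      rw [← hsum, map_add]
      rw [add_mul, mul_add, mul_add, hca]
      have h2s : (2 : k) • (ι a' * ι a) = ι a' * ι a + ι a' * ι a := two_smul k _
      rw [h2s]
      abel
    have hmain : τhat ⟨G u, hGmem u⟩ * h = τ ⟨G u, hGmem u⟩ * h - (B a a') • h := by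
      have ht' : τhat ⟨G u, hGmem u⟩ * h
          = ι a * ι a + (2 : k) • (ι a' * ι a) + ι a' * ι a' := by
        rw [← hGeq]
        exact hτhath
      rw [ht', hτh, hιu]
      abel
    -- conclude δ = 0
    have : δ ⟨G u, hGmem u⟩ * h = 0 * h := by
      have hδval : δ ⟨G u, hGmem u⟩
          = τhat ⟨G u, hGmem u⟩ - τ ⟨G u, hGmem u⟩
            + ((1 / 2 : k) * LinearMap.trace k F' (p ∘ₗ (G u) ∘ₗ F'.subtype)) • (1 : U) := by
        simp [δ, Tr, LinearMap.smulRight_apply]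
      rw [hδval, htrace]
      have hc : (1 / 2 : k) * (2 * B a a') = B a a' := by ring
      rw [hc, add_mul, sub_mul, hmain, smul_mul_assoc, one_mul, zero_mul]
      abel
    exact hcancel _ _ this
  -- δ vanishes everywhere
  have hδ0 : ∀ A : sp, δ A = 0 := by
    intro A
    have hmem := hspan A.1 A.2
    have key : ∀ (x : Module.End k H), x ∈ Submodule.span k (Set.range G) →
        ∀ hx : x ∈ sp, δ ⟨x, hx⟩ = 0 := by
      intro x hxspan
      induction hxspan using Submodule.span_induction with
      | mem x hx =>
        obtain ⟨u, rfl⟩ := hx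
        intro _
        exact hδG u
      | zero =>
        intro h0
        have : (⟨0, h0⟩ : sp) = 0 := rfl
        rw [this, map_zero]
      | add x y hx hy ihx ihy =>
        intro hxy
        have hxs : x ∈ sp := hle hx
        have hys : y ∈ sp := hle hy
        have : (⟨x + y, hxy⟩ : sp) = ⟨x, hxs⟩ + ⟨y, hys⟩ := rfl
        rw [this, map_add, ihx hxs, ihy hys, add_zero]
      | smul r x hx ihx =>
        intro hrx
        have hxs : x ∈ sp := hle hx
        have : (⟨r • x, hrx⟩ : sp) = r • ⟨x, hxs⟩ := rfl
        rw [this, map_smul, ihx hxs, smul_zero]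
    have := key A.1 hmem A.2
    simpa using this
  -- conclude
  intro A
  have hA := hδ0 A
  have hδval : δ A = τhat A - τ A
      + ((1 / 2 : k) * LinearMap.trace k F' (p ∘ₗ A.1 ∘ₗ F'.subtype)) • (1 : U) := by
    simp [δ, Tr, LinearMap.smulRight_apply]
  rw [hδval] at hA
  rw [eq_sub_iff_add_eq]
  apply sub_eq_zero.mp
  calc τhat A + ((1 / 2 : k) * LinearMap.trace k F' (p ∘ₗ A.1 ∘ₗ F'.subtype)) • (1 : U) - τ A
      = τhat A - τ A + ((1 / 2 : k) * LinearMap.trace k F' (p ∘ₗ A.1 ∘ₗ F'.subtype)) • (1 : U) := by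
        abel
    _ = 0 := hA
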